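/- Fix k ≥ 1 and let 𝕊 = S^{2k−1} = {x ∈ ℂ^k : |x|=1} with basepoint e=(1,0,…,0). Let 𝒮 be a collection of subsets of [n]={1,…,n} containing ∅ and closed under taking subsets, and let X_𝒮 = {x ∈ 𝕊^{×n} : {i : x_i ≠ e} ∈ 𝒮}. Then X_𝒮 admits a motion planner with at most z(X_𝒮)+1 local domains; in particular tc(X_𝒮) ≤ z(X_𝒮)+1, where z(X_𝒮) = max{|J|+|K| : J,K ∈ 𝒮 and J ∩ K = ∅}. -/

import Mathlib

/-- The topological complexity of a space `X`: the smallest number `k` such that `X × X`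
can be covered by `k` open subsets, on each of which there is a continuous map
`s : U → C([0,1], X)` with `s (x, y) 0 = x` and `s (x, y) 1 = y` (i.e. a continuous
local section of the path fibration `π : PX → X × X`). -/
noncomputable def tc (X : Type*) [TopologicalSpace X] : ℕ :=
  sInf {k : ℕ | ∃ U : Fin k → Set (X × X),
    (∀ i, IsOpen (U i)) ∧ (⋃ i, U i) = Set.univ ∧
    ∀ i, ∃ s : C(U i, C(unitInterval, X)),
      ∀ p : U i, (s p) 0 = (p : X × X).1 ∧ (s p) 1 = (p : X × X).2}

set_option linter.unusedSectionVars false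
namespace CPaux

variable {E : Type*} [NormedAddCommGroup E] [NormedSpace ℂ E]

noncomputable def nrm (v : E) : E := ‖v‖⁻¹ • v

noncomputable def interp (a b : E) (s : ℝ) : E := (1 - s) • a + s • b

noncomputable def geod (a b : E) (s : ℝ) : E := nrm (interp a b s)

noncomputable def wgt (e a b : E) : ℝ := ‖b - e‖ / (‖a - e‖ + ‖b - e‖)

noncomputable def sched (e a b : E) (t : ℝ) : ℝ := min 1 (max 0 (2*t - wgt e a b))

noncomputable def c1 (e a b : E) (t : ℝ) : E := geod a b (sched e a b t)

noncomputable def c2 (e a b : E) (t : ℝ) : E :=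
  Complex.exp (Real.pi * sched e a b t * Complex.I) • geod a (-b) (sched e a b t)

lemma nrm_of_norm_one {a : E} (h : ‖a‖ = 1) : nrm a = a := by
  simp [nrm, h]

lemma norm_nrm {v : E} (h : v ≠ 0) : ‖nrm v‖ = 1 := by
  rw [nrm, norm_smul, norm_inv, norm_norm]
  field_simp [norm_ne_zero_iff.mpr h]

lemma interp_zero (a b : E) : interp a b 0 = a := by simp [interp]
lemma interp_one (a b : E) : interp a b 1 = b := by simp [interp]
lemma interp_self {a : E} (s : ℝ) : interp a a s = a := by
  rw [interp, ← add_smul]; simp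

lemma interp_ne_zero {a b : E} (ha : ‖a‖ = 1) (hb : ‖b‖ = 1) (hab : a ≠ -b)
    {s : ℝ} (h0 : 0 ≤ s) (h1 : s ≤ 1) : interp a b s ≠ 0 := by
  intro h
  have h2 : (1 - s) • a = s • (-b) := by
    have := h
    rw [interp] at this
    rw [smul_neg]
    linear_combination (norm := module) this
  have h3 : |1 - s| = |s| := by
    have := congrArg (‖·‖) h2
    simpa [norm_smul, ha, hb] using this
  rw [abs_of_nonneg (by linarith), abs_of_nonneg h0] at h3
  have hs : s = 1/2 := by linarith
  apply hab
  have h4 : (1/2 : ℝ) • a = (1/2 : ℝ) • (-b) := by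
    rw [hs] at h2
    convert h2 using 2 <;> norm_num
  have := smul_right_injective E (by norm_num : (1/2:ℝ) ≠ 0) h4
  exact this

lemma wgt_nonneg (e a b : E) : 0 ≤ wgt e a b :=
  div_nonneg (norm_nonneg _) (by positivity)

lemma wgt_le_one (e a b : E) : wgt e a b ≤ 1 := by
  rcases eq_or_lt_of_le (by positivity : (0:ℝ) ≤ ‖a - e‖ + ‖b - e‖) with h | h
  · simp [wgt, ← h]
  · rw [wgt, div_le_one h]; linarith [norm_nonneg (a - e)]

lemma sched_nonneg (e a b : E) (t : ℝ) : 0 ≤ sched e a b t := by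
  rw [sched]; positivity

lemma sched_le_one (e a b : E) (t : ℝ) : sched e a b t ≤ 1 := min_le_left _ _

lemma sched_zero (e a b : E) : sched e a b 0 = 0 := by
  rw [sched]
  have := wgt_nonneg e a b
  rw [max_eq_left (by linarith), min_eq_right (by norm_num)]

lemma sched_one (e a b : E) : sched e a b 1 = 1 := by
  rw [sched]
  have := wgt_le_one e a b
  rw [min_eq_left (le_max_of_le_right (by linarith))]

lemma sched_of_a_eq {e a b : E} (ha : a = e) (hb : b ≠ e) {t : ℝ} (ht : t ≤ 1/2) :
    sched e a b t = 0 := by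
  have hq : ‖b - e‖ ≠ 0 := by simpa [sub_eq_zero] using hb
  have hw : wgt e a b = 1 := by
    rw [wgt, ha]; simp [hq]
  rw [sched, hw, max_eq_left (by linarith), min_eq_right (by norm_num)]

lemma sched_of_b_eq {e a b : E} (hb : b = e) {t : ℝ} (ht : 1/2 ≤ t) :
    sched e a b t = 1 := by
  have hw : wgt e a b = 0 := by rw [wgt, hb]; simp
  rw [sched, hw, min_eq_left (le_max_of_le_right (by linarith))]


lemma geod_zero {a : E} (b : E) (ha : ‖a‖ = 1) : geod a b 0 = a := by
  rw [geod, interp_zero, nrm_of_norm_one ha]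

lemma geod_one (a : E) {b : E} (hb : ‖b‖ = 1) : geod a b 1 = b := by
  rw [geod, interp_one, nrm_of_norm_one hb]

lemma geod_self {a : E} (ha : ‖a‖ = 1) (s : ℝ) : geod a a s = a := by
  rw [geod, interp_self, nrm_of_norm_one ha]

lemma exp_smul_zero (v : E) : Complex.exp ((Real.pi : ℂ) * (0:ℝ) * Complex.I) • v = v := by
  norm_num

lemma exp_smul_one (v : E) : Complex.exp ((Real.pi : ℂ) * (1:ℝ) * Complex.I) • v = -v := by
  norm_num [Complex.exp_pi_mul_I]

lemma c1_zero {e a : E} (b : E) (ha : ‖a‖ = 1) : c1 e a b 0 = a := by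
  rw [c1, sched_zero, geod_zero _ ha]

lemma c1_one (e a : E) {b : E} (hb : ‖b‖ = 1) : c1 e a b 1 = b := by
  rw [c1, sched_one, geod_one _ hb]

lemma c2_zero {e a : E} (b : E) (ha : ‖a‖ = 1) : c2 e a b 0 = a := by
  rw [c2, sched_zero, geod_zero _ ha]
  norm_num

lemma c2_one (e a : E) {b : E} (hb : ‖b‖ = 1) : c2 e a b 1 = b := by
  rw [c2, sched_one, geod_one _ (by simpa using hb)]
  rw [show ((Real.pi : ℂ) * (1:ℝ) * Complex.I) = (Real.pi : ℂ) * Complex.I by push_cast; ring,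
    Complex.exp_pi_mul_I]
  simp

lemma norm_c1 {e a b : E} (ha : ‖a‖ = 1) (hb : ‖b‖ = 1) (hab : a ≠ -b) (t : ℝ) :
    ‖c1 e a b t‖ = 1 :=
  norm_nrm (interp_ne_zero ha hb hab (sched_nonneg e a b t) (sched_le_one e a b t))

lemma norm_c2 {e a b : E} (ha : ‖a‖ = 1) (hb : ‖b‖ = 1) (hab : a ≠ b) (t : ℝ) :
    ‖c2 e a b t‖ = 1 := by
  rw [c2, norm_smul]
  have h1 : ‖Complex.exp ((Real.pi:ℂ) * (sched e a b t : ℝ) * Complex.I)‖ = 1 := by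
    rw [Complex.norm_exp]
    have : ((Real.pi:ℂ) * (sched e a b t : ℝ) * Complex.I).re = 0 := by
      simp [Complex.mul_re, Complex.mul_im]
    rw [this, Real.exp_zero]
  rw [h1, one_mul]
  exact norm_nrm (interp_ne_zero ha (by simpa using hb) (by simpa using hab)
    (sched_nonneg e a b t) (sched_le_one e a b t))

-- basepoint lemmas
lemma c1_of_a_eq {e a b : E} (he : ‖e‖ = 1) (ha : a = e) {t : ℝ} (ht : t ≤ 1/2) :
    c1 e a b t = e := by
  by_cases hb : b = e
  · rw [c1, ha, hb, geod_self he]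
  · rw [c1, sched_of_a_eq ha hb ht, geod_zero _ (ha ▸ he), ha]

lemma c1_of_b_eq {e a b : E} (he : ‖e‖ = 1) (hb : b = e) {t : ℝ} (ht : 1/2 ≤ t) :
    c1 e a b t = e := by
  by_cases ha : a = e
  · rw [c1, ha, hb, geod_self he]
  · rw [c1, sched_of_b_eq hb ht, geod_one _ (hb ▸ he), hb]

lemma c2_of_a_eq {e a b : E} (he : ‖e‖ = 1) (ha : a = e) (hb : b ≠ e) {t : ℝ} (ht : t ≤ 1/2) :
    c2 e a b t = e := by
  rw [c2, sched_of_a_eq ha hb ht, geod_zero _ (ha ▸ he), ha]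
  norm_num

lemma c2_of_b_eq {e a b : E} (he : ‖e‖ = 1) (hb : b = e) {t : ℝ} (ht : 1/2 ≤ t) :
    c2 e a b t = e := by
  rw [c2, sched_of_b_eq hb ht, geod_one _ (by simpa using (hb ▸ he))]
  rw [show ((Real.pi : ℂ) * (1:ℝ) * Complex.I) = (Real.pi : ℂ) * Complex.I by push_cast; ring,
    Complex.exp_pi_mul_I]
  simp [hb]


lemma contOn_nrm : ContinuousOn (nrm : E → E) {v | v ≠ 0} := by
  exact ((continuous_norm.continuousOn).inv₀ fun (v : E) (hv : v ≠ 0) => norm_ne_zero_iff.mpr hv).smul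
    continuousOn_id

lemma denom_ne {e : E} {p : (E × E) × ℝ} (h : p.1.1 ≠ p.1.2) :
    ‖p.1.1 - e‖ + ‖p.1.2 - e‖ ≠ 0 := by
  intro h0
  have h1 : ‖p.1.1 - e‖ = 0 := by
    have := norm_nonneg (p.1.1 - e); have := norm_nonneg (p.1.2 - e); linarith
  have h2 : ‖p.1.2 - e‖ = 0 := by
    have := norm_nonneg (p.1.1 - e); linarith
  rw [norm_eq_zero, sub_eq_zero] at h1 h2
  exact h (h1.trans h2.symm)

lemma contOn_sched (e : E) {s : Set ((E × E) × ℝ)}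
    (hs : ∀ p ∈ s, ‖p.1.1 - e‖ + ‖p.1.2 - e‖ ≠ 0) :
    ContinuousOn (fun p : (E × E) × ℝ => sched e p.1.1 p.1.2 p.2) s := by
  have hw : ContinuousOn (fun p : (E × E) × ℝ => wgt e p.1.1 p.1.2) s := by
    apply ContinuousOn.div
    · fun_prop
    · fun_prop
    · exact hs
  unfold sched
  have h1 : ContinuousOn (fun p : (E × E) × ℝ => 2 * p.2 - wgt e p.1.1 p.1.2) s :=
    (continuousOn_const.mul (continuous_snd.continuousOn)).sub hw
  have h2 : ContinuousOn (fun p : (E × E) × ℝ => max 0 (2 * p.2 - wgt e p.1.1 p.1.2)) s :=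
    ContinuousOn.sup' continuousOn_const h1
  exact ContinuousOn.inf' continuousOn_const h2

lemma contOn_geod_comp {e : E} {s : Set ((E × E) × ℝ)}
    (f g : (E × E) × ℝ → E)
    (hf : Continuous f) (hg : Continuous g)
    (hsch : ContinuousOn (fun p : (E × E) × ℝ => sched e p.1.1 p.1.2 p.2) s)
    (hne : ∀ p ∈ s, interp (f p) (g p) (sched e p.1.1 p.1.2 p.2) ≠ 0) :
    ContinuousOn (fun p : (E × E) × ℝ => geod (f p) (g p) (sched e p.1.1 p.1.2 p.2)) s := by
  have hi : ContinuousOn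
      (fun p : (E × E) × ℝ => interp (f p) (g p) (sched e p.1.1 p.1.2 p.2)) s := by
    unfold interp
    exact ((continuousOn_const.sub hsch).smul hf.continuousOn).add
      (hsch.smul hg.continuousOn)
  exact contOn_nrm.comp hi hne

lemma contOn_c2 (e : E) :
    ContinuousOn (fun p : (E × E) × ℝ => c2 e p.1.1 p.1.2 p.2)
      {p | ‖p.1.1‖ = 1 ∧ ‖p.1.2‖ = 1 ∧ p.1.1 ≠ p.1.2} := by
  have hsch := contOn_sched e (s := {p : (E × E) × ℝ | ‖p.1.1‖ = 1 ∧ ‖p.1.2‖ = 1 ∧ p.1.1 ≠ p.1.2})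
    (fun p hp => denom_ne hp.2.2)
  unfold c2
  apply ContinuousOn.smul
  · apply Complex.continuous_exp.comp_continuousOn
    have : ContinuousOn (fun p : (E × E) × ℝ =>
        ((sched e p.1.1 p.1.2 p.2 : ℝ) : ℂ)) _ := Complex.continuous_ofReal.comp_continuousOn hsch
    exact (continuousOn_const.mul this).mul continuousOn_const
  · apply contOn_geod_comp (fun p => p.1.1) (fun p => -p.1.2) (by fun_prop) (by fun_prop) hsch
    intro p hp
    exact interp_ne_zero hp.1 (by simpa using hp.2.1) (by simpa using hp.2.2)
      (sched_nonneg _ _ _ _) (sched_le_one _ _ _ _)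

lemma contOn_c1 {e : E} (he : ‖e‖ = 1) :
    ContinuousOn (fun p : (E × E) × ℝ => c1 e p.1.1 p.1.2 p.2)
      {p | ‖p.1.1‖ = 1 ∧ ‖p.1.2‖ = 1 ∧ p.1.1 ≠ -p.1.2} := by
  set s : Set ((E × E) × ℝ) := {p | ‖p.1.1‖ = 1 ∧ ‖p.1.2‖ = 1 ∧ p.1.1 ≠ -p.1.2} with hsdef
  intro p hp
  by_cases hpe : p.1 = (e, e)
  · -- the delicate point
    rw [Metric.continuousWithinAt_iff]
    intro ε hε
    refine ⟨min (1/4) (ε/4), by positivity, ?_⟩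
    intro q hq hd
    have hda : ‖q.1.1 - e‖ < min (1/4) (ε/4) := by
      have h1 : dist q.1.1 p.1.1 ≤ dist q p := by
        calc dist q.1.1 p.1.1 ≤ dist q.1 p.1 := by rw [Prod.dist_eq]; exact le_max_left _ _
        _ ≤ dist q p := by rw [Prod.dist_eq]; exact le_max_left _ _
      rw [hpe] at h1
      simpa [dist_eq_norm] using lt_of_le_of_lt h1 hd
    have hdb : ‖q.1.2 - e‖ < min (1/4) (ε/4) := by
      have h1 : dist q.1.2 p.1.2 ≤ dist q p := by
        calc dist q.1.2 p.1.2 ≤ dist q.1 p.1 := by rw [Prod.dist_eq]; exact le_max_right _ _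
        _ ≤ dist q p := by rw [Prod.dist_eq]; exact le_max_left _ _
      rw [hpe] at h1
      simpa [dist_eq_norm] using lt_of_le_of_lt h1 hd
    -- c1 at p is e
    have hcp : c1 e p.1.1 p.1.2 p.2 = e := by
      have : p.1.1 = e := by rw [hpe]
      have h2 : p.1.2 = e := by rw [hpe]
      unfold c1 geod
      rw [this, h2]
      have : interp e e (sched e e e p.2) = e := by
        unfold interp; rw [← add_smul]; simp
      rw [this]
      simp [nrm, he]
    rw [hcp]
    -- estimate
    set δ := min (1/4 : ℝ) (ε/4) with hδ
    have hδpos : 0 < δ := by positivity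
    have key : ∀ σ : ℝ, 0 ≤ σ → σ ≤ 1 → ‖interp q.1.1 q.1.2 σ - e‖ < δ := by
      intro σ hσ0 hσ1
      have heq : interp q.1.1 q.1.2 σ - e = (1 - σ) • (q.1.1 - e) + σ • (q.1.2 - e) := by
        unfold interp; module
      rw [heq]
      have hb1 : ‖(1 - σ) • (q.1.1 - e) + σ • (q.1.2 - e)‖
          ≤ (1 - σ) * ‖q.1.1 - e‖ + σ * ‖q.1.2 - e‖ := by
        calc ‖(1 - σ) • (q.1.1 - e) + σ • (q.1.2 - e)‖
            ≤ ‖(1 - σ) • (q.1.1 - e)‖ + ‖σ • (q.1.2 - e)‖ := norm_add_le _ _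
          _ = (1 - σ) * ‖q.1.1 - e‖ + σ * ‖q.1.2 - e‖ := by
              rw [norm_smul, norm_smul, Real.norm_eq_abs, Real.norm_eq_abs,
                abs_of_nonneg (by linarith), abs_of_nonneg hσ0]
      have hA := hda
      have hB := hdb
      rcases le_or_gt σ (1/2) with hc | hc
      · have h1 : (1 - σ) * ‖q.1.1 - e‖ < (1 - σ) * δ :=
          mul_lt_mul_of_pos_left hA (by linarith)
        have h2 : σ * ‖q.1.2 - e‖ ≤ σ * δ :=
          mul_le_mul_of_nonneg_left hB.le hσ0
        nlinarith
      · have h1 : (1 - σ) * ‖q.1.1 - e‖ ≤ (1 - σ) * δ :=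
          mul_le_mul_of_nonneg_left hA.le (by linarith)
        have h2 : σ * ‖q.1.2 - e‖ < σ * δ :=
          mul_lt_mul_of_pos_left hB (by linarith)
        nlinarith
    set σ := sched e q.1.1 q.1.2 q.2 with hσdef
    have hσ0 := sched_nonneg e q.1.1 q.1.2 q.2
    have hσ1 := sched_le_one e q.1.1 q.1.2 q.2
    set v := interp q.1.1 q.1.2 σ with hv
    have hve : ‖v - e‖ < δ := key σ hσ0 hσ1
    have hvne : v ≠ 0 := by
      intro h0
      rw [h0] at hve
      simp only [zero_sub, norm_neg] at hve
      have := lt_of_lt_of_le hve (min_le_left _ _)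
      rw [he] at this; norm_num at this
    have hnv : c1 e q.1.1 q.1.2 q.2 = nrm v := rfl
    have hnrm : ‖nrm v - e‖ ≤ 2 * ‖v - e‖ := by
      have h1 : ‖nrm v - v‖ = |1 - ‖v‖| := by
        unfold nrm
        have heq2 : ‖v‖⁻¹ • v - v = (‖v‖⁻¹ - 1) • v := by rw [sub_smul, one_smul]
        rw [heq2, norm_smul, Real.norm_eq_abs]
        have hvn : ‖v‖ ≠ 0 := norm_ne_zero_iff.mpr hvne
        rw [show ‖v‖⁻¹ - 1 = (1 - ‖v‖) / ‖v‖ by field_simp, abs_div, abs_of_nonneg (norm_nonneg v),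
          div_mul_cancel₀ _ hvn]
      have h2 : |1 - ‖v‖| ≤ ‖v - e‖ := by
        have := abs_norm_sub_norm_le v e
        rw [he] at this
        rw [abs_sub_comm]
        exact this
      calc ‖nrm v - e‖ ≤ ‖nrm v - v‖ + ‖v - e‖ := by
            have := norm_add_le (nrm v - v) (v - e); simpa using this
        _ ≤ 2 * ‖v - e‖ := by rw [h1]; linarith
    rw [dist_eq_norm, hnv]
    calc ‖nrm v - e‖ ≤ 2 * ‖v - e‖ := hnrm
      _ < 2 * δ := by linarith
      _ ≤ 2 * (ε/4) := by
          have := min_le_right (1/4 : ℝ) (ε/4); linarith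
      _ < ε := by linarith
  · -- away from (e,e): standard composition
    have hopen : {q : (E × E) × ℝ | q.1 ≠ (e, e)} ∈ nhds p :=
      (isOpen_ne_fun (by fun_prop) continuous_const).mem_nhds hpe
    rw [← continuousWithinAt_inter hopen]
    have hden : ∀ q ∈ s ∩ {q : (E × E) × ℝ | q.1 ≠ (e, e)},
        ‖q.1.1 - e‖ + ‖q.1.2 - e‖ ≠ 0 := by
      intro q hq h0
      have h1 : ‖q.1.1 - e‖ = 0 := by
        have := norm_nonneg (q.1.1 - e); have := norm_nonneg (q.1.2 - e); linarith
      have h2 : ‖q.1.2 - e‖ = 0 := by have := norm_nonneg (q.1.1 - e); linarith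
      rw [norm_eq_zero, sub_eq_zero] at h1 h2
      exact hq.2 (Prod.ext h1 h2)
    have hsch := contOn_sched e hden
    have : ContinuousOn (fun q : (E × E) × ℝ => c1 e q.1.1 q.1.2 q.2)
        (s ∩ {q : (E × E) × ℝ | q.1 ≠ (e, e)}) := by
      unfold c1
      apply contOn_geod_comp (fun q => q.1.1) (fun q => q.1.2) (by fun_prop) (by fun_prop) hsch
      intro q hq
      exact interp_ne_zero hq.1.1 hq.1.2.1 hq.1.2.2 (sched_nonneg _ _ _ _) (sched_le_one _ _ _ _)
    exact this p ⟨hp, hpe⟩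


end CPaux
namespace CPaux

-- gluing lemma
lemma glue_sections {W Y : Type*} [TopologicalSpace W] [TopologicalSpace Y] [Nonempty Y]
    {ι : Type*} (O : ι → Set W) (hO : ∀ i, IsOpen (O i))
    (hdisj : ∀ i j, i ≠ j → Disjoint (O i) (O j))
    (f : ι → W → Y) (hf : ∀ i, ContinuousOn (f i) (O i)) :
    ∃ F : W → Y, ContinuousOn F (⋃ i, O i) ∧ ∀ i, ∀ w ∈ O i, F w = f i w := by
  classical
  refine ⟨fun w => if h : ∃ i, w ∈ O i then f h.choose w else Classical.arbitrary Y, ?_, ?_⟩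
  · intro w hw
    obtain ⟨i, hwi⟩ := Set.mem_iUnion.mp hw
    rw [← continuousWithinAt_inter ((hO i).mem_nhds hwi)]
    have hc : ContinuousWithinAt (f i) ((⋃ j, O j) ∩ O i) w :=
      ((hf i) w hwi).mono Set.inter_subset_right
    apply hc.congr
    · intro y hy
      have h : ∃ j, y ∈ O j := ⟨i, hy.2⟩
      rw [dif_pos h]
      have : h.choose = i := by
        by_contra hne
        exact Set.disjoint_left.mp (hdisj _ _ hne) h.choose_spec hy.2
      rw [this]
    · have h : ∃ j, w ∈ O j := ⟨i, hwi⟩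
      rw [dif_pos h]
      have : h.choose = i := by
        by_contra hne
        exact Set.disjoint_left.mp (hdisj _ _ hne) h.choose_spec hwi
      rw [this]
  · intro i w hw
    have h : ∃ j, w ∈ O j := ⟨i, hw⟩
    show (if h : ∃ j, w ∈ O j then f h.choose w else Classical.arbitrary Y) = f i w
    rw [dif_pos h]
    have : h.choose = i := by
      by_contra hne
      exact Set.disjoint_left.mp (hdisj _ _ hne) h.choose_spec hw
    rw [this]

section Main

variable {k n : ℕ} (hk : 0 < k) (S : Set (Set (Fin n)))

local notation "E'" => EuclideanSpace ℂ (Fin k)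

noncomputable def ep (hk : 0 < k) : E' := EuclideanSpace.single (⟨0, hk⟩ : Fin k) 1

lemma norm_ep : ‖ep hk‖ = 1 := by
  simp [ep, EuclideanSpace.norm_single]

@[reducible] def Xs : Type _ :=
  {x : Fin n → E' // (∀ i, ‖x i‖ = 1) ∧ {i | x i ≠ ep hk} ∈ S}

lemma self_ne_neg {v : E'} (hv : ‖v‖ = 1) : v ≠ -v := by
  intro h
  have h2 : (2:ℝ) • v = 0 := by
    have : v + v = 0 := by nth_rewrite 1 [h]; simp
    rw [two_smul]; exact this
  have := smul_eq_zero.mp h2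
  rcases this with h3 | h3
  · norm_num at h3
  · rw [h3, norm_zero] at hv; norm_num at hv

def OT (T : Finset (Fin n)) : Set (Xs hk S × Xs hk S) :=
  {p | (∀ i ∈ T, p.1.1 i ≠ p.2.1 i) ∧ (∀ i ∉ T, p.1.1 i ≠ -(p.2.1 i)) ∧
    ∀ i ∈ T, ∀ j ∉ T, ‖p.1.1 j - p.2.1 j‖ < ‖p.1.1 i - p.2.1 i‖}

lemma continuous_evalx (i : Fin n) :
    Continuous fun p : Xs hk S × Xs hk S => p.1.1 i :=
  (continuous_apply i).comp (continuous_subtype_val.comp continuous_fst)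

lemma continuous_evaly (i : Fin n) :
    Continuous fun p : Xs hk S × Xs hk S => p.2.1 i :=
  (continuous_apply i).comp (continuous_subtype_val.comp continuous_snd)

lemma isOpen_OT (T : Finset (Fin n)) : IsOpen (OT hk S T) := by
  classical
  have hEq : OT hk S T =
      (⋂ i ∈ T, {p : Xs hk S × Xs hk S | p.1.1 i ≠ p.2.1 i}) ∩
      ((⋂ i ∈ Tᶜ, {p : Xs hk S × Xs hk S | p.1.1 i ≠ -(p.2.1 i)}) ∩
      (⋂ i ∈ T, ⋂ j ∈ Tᶜ,
        {p : Xs hk S × Xs hk S | ‖p.1.1 j - p.2.1 j‖ < ‖p.1.1 i - p.2.1 i‖})) := by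
    ext p
    simp only [OT, Set.mem_setOf_eq, Set.mem_inter_iff, Set.mem_iInter, Finset.mem_compl]
  rw [hEq]
  refine IsOpen.inter ?_ (IsOpen.inter ?_ ?_)
  · exact isOpen_biInter_finset fun i _ =>
      isOpen_ne_fun (continuous_evalx hk S i) (continuous_evaly hk S i)
  · exact isOpen_biInter_finset fun i _ =>
      isOpen_ne_fun (continuous_evalx hk S i) ((continuous_evaly hk S i).neg)
  · exact isOpen_biInter_finset fun i _ => isOpen_biInter_finset fun j _ =>
      isOpen_lt (((continuous_evalx hk S j).sub (continuous_evaly hk S j)).norm)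
        (((continuous_evalx hk S i).sub (continuous_evaly hk S i)).norm)

lemma disjoint_OT {T T' : Finset (Fin n)} (hcard : T.card = T'.card) (hne : T ≠ T') :
    Disjoint (OT hk S T) (OT hk S T') := by
  rw [Set.disjoint_left]
  intro p hp hp'
  have h1 : ∃ i, i ∈ T ∧ i ∉ T' := by
    by_contra h
    push_neg at h
    exact hne (Finset.eq_of_subset_of_card_le (fun i hi => h i hi) (le_of_eq hcard.symm))
  have h2 : ∃ j, j ∈ T' ∧ j ∉ T := by
    by_contra h
    push_neg at h
    exact hne (Finset.eq_of_subset_of_card_le (fun j hj => h j hj) (le_of_eq hcard)).symm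
  obtain ⟨i, hiT, hiT'⟩ := h1
  obtain ⟨j, hjT', hjT⟩ := h2
  have l1 := hp.2.2 i hiT j hjT
  have l2 := hp'.2.2 j hjT' i hiT'
  linarith

-- paths
noncomputable def pathF (T : Finset (Fin n)) (p : (Xs hk S × Xs hk S) × ℝ) : Fin n → E' :=
  fun i => if i ∈ T then c2 (ep hk) (p.1.1.1 i) (p.1.2.1 i) p.2
    else c1 (ep hk) (p.1.1.1 i) (p.1.2.1 i) p.2

lemma pathF_norm (T : Finset (Fin n)) {p : (Xs hk S × Xs hk S) × ℝ} (hp : p.1 ∈ OT hk S T)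
    (i : Fin n) : ‖pathF hk S T p i‖ = 1 := by
  unfold pathF
  by_cases hiT : i ∈ T
  · rw [if_pos hiT]
    exact norm_c2 (p.1.1.2.1 i) (p.1.2.2.1 i) (hp.1 i hiT) _
  · rw [if_neg hiT]
    exact norm_c1 (p.1.1.2.1 i) (p.1.2.2.1 i) (hp.2.1 i hiT) _

lemma pathF_supp (hSdc : ∀ J ∈ S, ∀ K ⊆ J, K ∈ S) (T : Finset (Fin n))
    {p : (Xs hk S × Xs hk S) × ℝ} (hp : p.1 ∈ OT hk S T) :
    {i | pathF hk S T p i ≠ ep hk} ∈ S := by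
  rcases le_or_gt p.2 (1/2) with ht | ht
  · apply hSdc _ p.1.1.2.2
    intro i hi
    simp only [Set.mem_setOf_eq] at hi ⊢
    by_contra hxe
    apply hi
    unfold pathF
    by_cases hiT : i ∈ T
    · rw [if_pos hiT]
      have hb : p.1.2.1 i ≠ ep hk := by
        intro h
        exact (hp.1 i hiT) (by rw [hxe, h])
      exact c2_of_a_eq (norm_ep hk) hxe hb ht
    · rw [if_neg hiT]
      exact c1_of_a_eq (norm_ep hk) hxe ht
  · apply hSdc _ p.1.2.2.2
    intro i hi
    simp only [Set.mem_setOf_eq] at hi ⊢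
    by_contra hye
    apply hi
    unfold pathF
    by_cases hiT : i ∈ T
    · rw [if_pos hiT]
      exact c2_of_b_eq (norm_ep hk) hye ht.le
    · rw [if_neg hiT]
      exact c1_of_b_eq (norm_ep hk) hye ht.le

lemma pathF_zero (T : Finset (Fin n)) (z : Xs hk S × Xs hk S) :
    pathF hk S T (z, 0) = z.1.1 := by
  funext i
  unfold pathF
  by_cases hiT : i ∈ T
  · rw [if_pos hiT]; exact c2_zero _ (z.1.2.1 i)
  · rw [if_neg hiT]; exact c1_zero _ (z.1.2.1 i)

lemma pathF_one (T : Finset (Fin n)) (z : Xs hk S × Xs hk S) :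
    pathF hk S T (z, 1) = z.2.1 := by
  funext i
  unfold pathF
  by_cases hiT : i ∈ T
  · rw [if_pos hiT]; exact c2_one _ _ (z.2.2.1 i)
  · rw [if_neg hiT]; exact c1_one _ _ (z.2.2.1 i)

lemma continuous_pathF (T : Finset (Fin n)) :
    Continuous fun q : ↥(OT hk S T) × unitInterval =>
      pathF hk S T ((q.1 : Xs hk S × Xs hk S), (q.2 : ℝ)) := by
  apply continuous_pi
  intro i
  have hxc : Continuous fun q : ↥(OT hk S T) × unitInterval => (q.1 : Xs hk S × Xs hk S).1.1 i :=
    (continuous_evalx hk S i).comp (continuous_subtype_val.comp continuous_fst)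
  have hyc : Continuous fun q : ↥(OT hk S T) × unitInterval => (q.1 : Xs hk S × Xs hk S).2.1 i :=
    (continuous_evaly hk S i).comp (continuous_subtype_val.comp continuous_fst)
  have htc : Continuous fun q : ↥(OT hk S T) × unitInterval => (q.2 : ℝ) :=
    continuous_subtype_val.comp continuous_snd
  have hg : Continuous fun q : ↥(OT hk S T) × unitInterval =>
      ((((q.1 : Xs hk S × Xs hk S).1.1 i, (q.1 : Xs hk S × Xs hk S).2.1 i) : E' × E'), (q.2 : ℝ)) :=
    (hxc.prodMk hyc).prodMk htc
  unfold pathF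
  by_cases hiT : i ∈ T
  · simp only [if_pos hiT]
    have hmem : ∀ q : ↥(OT hk S T) × unitInterval,
        ((((q.1 : Xs hk S × Xs hk S).1.1 i, (q.1 : Xs hk S × Xs hk S).2.1 i) : E' × E'), (q.2 : ℝ))
          ∈ {r : (E' × E') × ℝ | ‖r.1.1‖ = 1 ∧ ‖r.1.2‖ = 1 ∧ r.1.1 ≠ r.1.2} :=
      fun q => ⟨(q.1 : Xs hk S × Xs hk S).1.2.1 i, (q.1 : Xs hk S × Xs hk S).2.2.1 i,
        q.1.2.1 i hiT⟩
    have := ContinuousOn.comp_continuous (contOn_c2 (ep hk)) hg hmem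
    exact this
  · simp only [if_neg hiT]
    have hmem : ∀ q : ↥(OT hk S T) × unitInterval,
        ((((q.1 : Xs hk S × Xs hk S).1.1 i, (q.1 : Xs hk S × Xs hk S).2.1 i) : E' × E'), (q.2 : ℝ))
          ∈ {r : (E' × E') × ℝ | ‖r.1.1‖ = 1 ∧ ‖r.1.2‖ = 1 ∧ r.1.1 ≠ -r.1.2} :=
      fun q => ⟨(q.1 : Xs hk S × Xs hk S).1.2.1 i, (q.1 : Xs hk S × Xs hk S).2.2.1 i,
        q.1.2.2.1 i hiT⟩
    have := ContinuousOn.comp_continuous (contOn_c1 (norm_ep hk)) hg hmem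
    exact this

noncomputable def bundled (hSdc : ∀ J ∈ S, ∀ K ⊆ J, K ∈ S) (T : Finset (Fin n)) :
    C(↥(OT hk S T) × unitInterval, Xs hk S) :=
  ⟨fun q => ⟨pathF hk S T ((q.1 : Xs hk S × Xs hk S), (q.2 : ℝ)),
      fun i => pathF_norm hk S T q.1.2 i, pathF_supp hk S hSdc T q.1.2⟩,
    (continuous_pathF hk S T).subtype_mk _⟩

noncomputable def basept (hS0 : ∅ ∈ S) : Xs hk S :=
  ⟨fun _ => ep hk, fun _ => norm_ep hk, by
    have : {i : Fin n | ep hk (k := k) ≠ ep hk} = ∅ := by simp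
    rw [this]; exact hS0⟩

open Classical in
noncomputable def sectT (hS0 : ∅ ∈ S) (hSdc : ∀ J ∈ S, ∀ K ⊆ J, K ∈ S)
    (T : Finset (Fin n)) : Xs hk S × Xs hk S → C(unitInterval, Xs hk S) :=
  fun z =>
    if h : z ∈ OT hk S T then (ContinuousMap.curry (bundled hk S hSdc T)) ⟨z, h⟩
    else ⟨fun _ => basept hk S hS0, continuous_const⟩

open Classical in
lemma contOn_sectT (hS0 : ∅ ∈ S) (hSdc : ∀ J ∈ S, ∀ K ⊆ J, K ∈ S) (T : Finset (Fin n)) :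
    ContinuousOn (sectT hk S hS0 hSdc T) (OT hk S T) := by
  rw [continuousOn_iff_continuous_restrict]
  have heq : (OT hk S T).domRestrict (sectT hk S hS0 hSdc T)
      = fun z : ↥(OT hk S T) => (ContinuousMap.curry (bundled hk S hSdc T)) z := by
    funext z
    simp only [Set.domRestrict_apply, sectT, dif_pos z.2]
  rw [heq]
  exact (ContinuousMap.curry (bundled hk S hSdc T)).continuous

open Classical in
lemma sectT_apply (hS0 : ∅ ∈ S) (hSdc : ∀ J ∈ S, ∀ K ⊆ J, K ∈ S) (T : Finset (Fin n))
    {z : Xs hk S × Xs hk S} (h : z ∈ OT hk S T) (t : unitInterval) :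
    ((sectT hk S hS0 hSdc T z) t).1 = pathF hk S T (z, (t : ℝ)) := by
  rw [sectT, dif_pos h, ContinuousMap.curry_apply]
  rfl

noncomputable def Um (m : ℕ) : Set (Xs hk S × Xs hk S) :=
  ⋃ T : {T : Finset (Fin n) // T.card = m}, OT hk S T.1

lemma isOpen_Um (m : ℕ) : IsOpen (Um hk S m) :=
  isOpen_iUnion fun T => isOpen_OT hk S T.1

lemma exists_section (hS0 : ∅ ∈ S) (hSdc : ∀ J ∈ S, ∀ K ⊆ J, K ∈ S) (m : ℕ) :
    ∃ s : C(↥(Um hk S m), C(unitInterval, Xs hk S)),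
      ∀ p : ↥(Um hk S m),
        (s p) 0 = (p : Xs hk S × Xs hk S).1 ∧ (s p) 1 = (p : Xs hk S × Xs hk S).2 := by
  have hne : Nonempty C(unitInterval, Xs hk S) :=
    ⟨⟨fun _ => basept hk S hS0, continuous_const⟩⟩
  obtain ⟨F, hFc, hFa⟩ :=
    glue_sections (fun T : {T : Finset (Fin n) // T.card = m} => OT hk S T.1)
      (fun T => isOpen_OT hk S T.1)
      (fun T T' hne' => disjoint_OT hk S (T.2.trans T'.2.symm) fun h => hne' (Subtype.ext h))
      (fun T => sectT hk S hS0 hSdc T.1)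
      (fun T => contOn_sectT hk S hS0 hSdc T.1)
  refine ⟨⟨(Um hk S m).restrict F, continuousOn_iff_continuous_restrict.mp hFc⟩, ?_⟩
  intro p
  obtain ⟨T, hT⟩ := Set.mem_iUnion.mp p.2
  have hFp : F p.1 = sectT hk S hS0 hSdc T.1 p.1 := hFa T p.1 hT
  constructor
  · apply Subtype.ext
    show ((F p.1) 0).1 = _
    rw [hFp, sectT_apply hk S hS0 hSdc T.1 hT 0]
    have h0 : ((0 : unitInterval) : ℝ) = 0 := rfl
    rw [h0, pathF_zero]
  · apply Subtype.ext
    show ((F p.1) 1).1 = _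
    rw [hFp, sectT_apply hk S hS0 hSdc T.1 hT 1]
    have h1 : ((1 : unitInterval) : ℝ) = 1 := rfl
    rw [h1, pathF_one]

lemma covers (hSdc : ∀ J ∈ S, ∀ K ⊆ J, K ∈ S) (z : ℕ)
    (hz : IsGreatest
      {m : ℕ | ∃ J ∈ S, ∃ K ∈ S, Disjoint J K ∧ J.ncard + K.ncard = m} z) :
    (⋃ m : Fin (z+1), Um hk S m.1) = Set.univ := by
  classical
  ext p
  simp only [Set.mem_univ, iff_true, Set.mem_iUnion]
  obtain ⟨x, y⟩ := p
  set T0 : Finset (Fin n) := Finset.univ.filter (fun i => x.1 i ≠ y.1 i) with hT0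
  have hmemT0 : ∀ i, i ∈ T0 ↔ x.1 i ≠ y.1 i := by
    intro i; rw [hT0, Finset.mem_filter]; simp
  -- card bound
  have hcard : T0.card ≤ z := by
    set J : Set (Fin n) := {i | x.1 i ≠ y.1 i ∧ y.1 i = ep hk} with hJ
    set K : Set (Fin n) := {i | x.1 i ≠ y.1 i ∧ y.1 i ≠ ep hk} with hK
    have hJS : J ∈ S := by
      apply hSdc _ x.2.2
      intro i hi
      simp only [hJ, Set.mem_setOf_eq] at hi ⊢
      intro h
      exact hi.1 (h.trans hi.2.symm)
    have hKS : K ∈ S := by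
      apply hSdc _ y.2.2
      intro i hi
      exact hi.2
    have hd : Disjoint J K := Set.disjoint_left.mpr fun i hi hik => hik.2 hi.2
    have hJK : J ∪ K = {i | x.1 i ≠ y.1 i} := by
      ext i
      simp only [hJ, hK, Set.mem_union, Set.mem_setOf_eq]
      by_cases h : y.1 i = ep hk <;> tauto
    have hle : J.ncard + K.ncard ≤ z := hz.2 ⟨J, hJS, K, hKS, hd, rfl⟩
    have hcoe : (↑T0 : Set (Fin n)) = {i | x.1 i ≠ y.1 i} := by
      ext i
      rw [Finset.mem_coe, hmemT0]
      rfl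
    have : T0.card = J.ncard + K.ncard := by
      rw [← Set.ncard_coe_finset, hcoe, ← hJK,
        Set.ncard_union_eq hd (Set.toFinite _) (Set.toFinite _)]
    omega
  refine ⟨⟨T0.card, by omega⟩, Set.mem_iUnion.mpr ⟨⟨T0, rfl⟩, ?_, ?_, ?_⟩⟩
  · intro i hi
    exact (hmemT0 i).mp hi
  · intro i hi
    have hxy : x.1 i = y.1 i := of_not_not fun h => hi ((hmemT0 i).mpr h)
    rw [hxy]
    exact self_ne_neg (y.2.1 i)
  · intro i hi j hj
    have hxyj : x.1 j = y.1 j := of_not_not fun h => hj ((hmemT0 j).mpr h)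
    have h1 : ‖x.1 j - y.1 j‖ = 0 := by rw [hxyj, sub_self, norm_zero]
    have h2 : 0 < ‖x.1 i - y.1 i‖ :=
      norm_pos_iff.mpr (sub_ne_zero.mpr ((hmemT0 i).mp hi))
    rw [h1]
    exact h2

lemma tc_le (hS0 : ∅ ∈ S) (hSdc : ∀ J ∈ S, ∀ K ⊆ J, K ∈ S) (z : ℕ)
    (hz : IsGreatest
      {m : ℕ | ∃ J ∈ S, ∃ K ∈ S, Disjoint J K ∧ J.ncard + K.ncard = m} z) :
    tc (Xs hk S) ≤ z + 1 := by
  apply Nat.sInf_le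
  refine ⟨fun m : Fin (z+1) => Um hk S m.1, fun m => isOpen_Um hk S m.1,
    covers hk S hSdc z hz, fun m => exists_section hk S hS0 hSdc m.1⟩

end Main
end CPaux

/-- **Cohen–Pruidze.**  Fix `k ≥ 1` and let `𝕊 = S^{2k-1} = {x ∈ ℂ^k : ‖x‖ = 1}` with
basepoint `e = (1,0,…,0)`.  Let `𝒮` be a collection of subsets of `[n]` containing `∅` and
closed under taking subsets, and let `X_𝒮 = {x ∈ 𝕊^n : {i : x i ≠ e} ∈ 𝒮}` be the
corresponding subcomplex of the standard CW-decomposition of `𝕊^n`.  Then `X_𝒮`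
admits a motion planner with at most `z(X_𝒮) + 1` local domains; in particular
`tc(X_𝒮) ≤ z(X_𝒮) + 1`, where `z(X_𝒮) = max {|J| + |K| : J, K ∈ 𝒮, J ∩ K = ∅}`. -/
theorem tc_torus_subcomplex_le (k n : ℕ) (hk : 0 < k) (S : Set (Set (Fin n)))
    (hS0 : ∅ ∈ S) (hSdc : ∀ J ∈ S, ∀ K ⊆ J, K ∈ S) (z : ℕ)
    (hz : IsGreatest
      {m : ℕ | ∃ J ∈ S, ∃ K ∈ S, Disjoint J K ∧ J.ncard + K.ncard = m} z) :
    tc {x : Fin n → EuclideanSpace ℂ (Fin k) //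
        (∀ i, ‖x i‖ = 1) ∧ {i | x i ≠ EuclideanSpace.single (⟨0, hk⟩ : Fin k) 1} ∈ S}
      ≤ z + 1 := by
  exact CPaux.tc_le hk S hS0 hSdc z hz
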